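/- Let p be a real polynomial of degree d, and suppose max_{x,y ∈ [a,b]} |p(x) - p(y)| ≥ H for reals a < b and H > 0. Let ε ≤ 1/(100 d²) and a' = a + ε(b - a). Then max_{x,y ∈ [a',b]} |p(x) - p(y)| ≥ H/2. -/

import Mathlib

set_option maxHeartbeats 2000000

open Polynomial Real Finset

open Polynomial Real

lemma natDegree_T_le (n : ℕ) : (Chebyshev.T ℝ n).natDegree ≤ n := by
  induction n using Nat.strong_induction_on with
  | _ n ih =>
    match n with
    | 0 => simp [Chebyshev.T_zero]
    | 1 => simp [Chebyshev.T_one]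
    | (m+2) =>
      have h1 := ih m (by omega)
      have h2 := ih (m+1) (by omega)
      have hc : ((m+2 : ℕ) : ℤ) = (m : ℤ) + 2 := by push_cast; ring
      have hcast : ((m : ℤ) + 1) = ((m+1 : ℕ) : ℤ) := by push_cast; ring
      rw [hc, Chebyshev.T_add_two, hcast]
      refine le_trans (Polynomial.natDegree_sub_le _ _) (max_le ?_ (h1.trans (by omega)))
      refine le_trans (Polynomial.natDegree_mul_le) ?_
      have hX : (2 * X : ℝ[X]).natDegree ≤ 1 := by compute_degree
      omega

lemma T_eval_formula (n : ℕ) {x : ℝ} (hx : 1 ≤ x) :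
    (Chebyshev.T ℝ n).eval x
      = ((x + Real.sqrt (x^2-1))^n + (x + Real.sqrt (x^2-1))⁻¹^n)/2 := by
  set y := x + Real.sqrt (x^2-1) with hy
  have hsq : Real.sqrt (x^2-1) ^ 2 = x^2 - 1 := Real.sq_sqrt (by nlinarith)
  have hy1 : 1 ≤ y := by
    have := Real.sqrt_nonneg (x^2-1); simp only [hy]; nlinarith
  have hy0 : y ≠ 0 := by positivity
  have hkey : y + y⁻¹ = 2 * x := by
    have h1 : y * (x - Real.sqrt (x^2-1)) = 1 := by nlinarith
    field_simp
    nlinarith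
  induction n using Nat.strong_induction_on with
  | _ n ih =>
    match n with
    | 0 => simp [Chebyshev.T_zero]
    | 1 =>
      simp only [Chebyshev.T_one, Nat.cast_one, eval_X, pow_one]
      linarith
    | (m+2) =>
      have h1 := ih m (by omega)
      have h2 := ih (m+1) (by omega)
      have hc : ((m+2 : ℕ) : ℤ) = (m : ℤ) + 2 := by push_cast; ring
      have hcast : ((m : ℤ) + 1) = ((m+1 : ℕ) : ℤ) := by push_cast; ring
      rw [hc, Chebyshev.T_add_two]
      simp only [eval_sub, eval_mul, eval_ofNat, eval_X]
      rw [hcast, h1, h2]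
      have h2x : (2:ℝ) * x = y + y⁻¹ := by linarith
      have e1 : y * y⁻¹ ^ (m+1) = y⁻¹ ^ m := by
        rw [pow_succ]; field_simp; try ring
      have e2 : y⁻¹ * y ^ (m+1) = y ^ m := by
        rw [pow_succ]; field_simp; try ring
      rw [h2x]
      linear_combination (1/2 : ℝ) * e1 + (1/2 : ℝ) * e2



lemma paturi (d : ℕ) (hd : 1 ≤ d) (q : ℝ[X]) (hq : q.natDegree ≤ d)
    (hbd : ∀ u ∈ Set.Icc (-1:ℝ) 1, |q.eval u| ≤ 1) {x : ℝ} (hx : 1 < x)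
    (hTdeg : (Chebyshev.T ℝ d).natDegree ≤ d) :
    |q.eval x| ≤ (Chebyshev.T ℝ d).eval x := by
  have hdR : (0:ℝ) < d := by exact_mod_cast hd
  set v : ℕ → ℝ := fun k => Real.cos (k * π / d) with hv
  set s : Finset ℕ := Finset.range (d+1) with hs
  have hang : ∀ k : ℕ, k ≤ d → (k * π / d : ℝ) ∈ Set.Icc 0 π := by
    intro k hk
    constructor
    · positivity
    · rw [div_le_iff₀ hdR]
      have : (k:ℝ) ≤ d := by exact_mod_cast hk
      nlinarith [Real.pi_pos]
  have hinj : Set.InjOn v ↑s := by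
    intro i hi j hj hij
    simp only [hs, coe_range, Set.mem_Iio] at hi hj
    have hi' : i ≤ d := by omega
    have hj' : j ≤ d := by omega
    have h0 := Real.injOn_cos (hang i hi') (hang j hj') hij
    rw [mul_div_assoc, mul_div_assoc] at h0
    have hne : (π / (d:ℝ)) ≠ 0 := by positivity
    have : (i:ℝ) = j := mul_right_cancel₀ hne h0
    exact_mod_cast this
  have hmono : ∀ i j : ℕ, i < j → j ≤ d → v j < v i := by
    intro i j hij hj
    apply Real.cos_lt_cos_of_nonneg_of_le_pi (hang i (by omega)).1 (hang j hj).2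
    rw [mul_div_assoc, mul_div_assoc]
    have h1 : (i:ℝ) < j := by exact_mod_cast hij
    have hπ : (0:ℝ) < π / d := by positivity
    nlinarith
  have hvmem : ∀ k : ℕ, v k ∈ Set.Icc (-1:ℝ) 1 :=
    fun k => ⟨Real.neg_one_le_cos _, Real.cos_le_one _⟩
  have hxgt : ∀ k : ℕ, v k < x := fun k => lt_of_le_of_lt (hvmem k).2 hx
  set L : ℕ → ℝ := fun k => (Lagrange.basis s v k).eval x with hL
  have hLval : ∀ k, L k = (∏ j ∈ s.erase k, (x - v j)) / (∏ j ∈ s.erase k, (v k - v j)) := by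
    intro k
    simp only [hL, Lagrange.basis, eval_prod, Lagrange.basisDivisor, eval_mul, eval_C, eval_sub,
      eval_X]
    rw [← Finset.prod_div_distrib]
    congr 1 with j
    rw [div_eq_inv_mul]
  have hNpos : ∀ k, 0 < ∏ j ∈ s.erase k, (x - v j) := by
    intro k
    exact Finset.prod_pos fun j _ => sub_pos.mpr (hxgt j)
  have hDsign : ∀ k ∈ s, 0 < (-1:ℝ)^k * ∏ j ∈ s.erase k, (v k - v j) := by
    intro k hk
    simp only [hs, mem_range] at hk
    have hk' : k ≤ d := by omega
    have hsplit : s.erase k = Finset.range k ∪ Finset.Ico (k+1) (d+1) := by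
      ext j
      simp only [hs, Finset.mem_erase, Finset.mem_range, Finset.mem_union, Finset.mem_Ico]
      omega
    have hdisj : Disjoint (Finset.range k) (Finset.Ico (k+1) (d+1)) := by
      simp only [Finset.disjoint_left, Finset.mem_range, Finset.mem_Ico]
      omega
    rw [hsplit, Finset.prod_union hdisj]
    have e1 : ∏ j ∈ Finset.range k, (v k - v j)
        = (-1:ℝ)^k * ∏ j ∈ Finset.range k, (v j - v k) := by
      calc ∏ j ∈ Finset.range k, (v k - v j)
          = ∏ j ∈ Finset.range k, (-1:ℝ) * (v j - v k) :=
            Finset.prod_congr rfl fun j _ => by ring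
        _ = (∏ _j ∈ Finset.range k, (-1:ℝ)) * ∏ j ∈ Finset.range k, (v j - v k) :=
            Finset.prod_mul_distrib
        _ = (-1:ℝ)^k * ∏ j ∈ Finset.range k, (v j - v k) := by
            rw [Finset.prod_const, Finset.card_range]
    have p1 : 0 < ∏ j ∈ Finset.range k, (v j - v k) :=
      Finset.prod_pos fun j hj => sub_pos.mpr (hmono j k (Finset.mem_range.mp hj) hk')
    have p2 : 0 < ∏ j ∈ Finset.Ico (k+1) (d+1), (v k - v j) := by
      refine Finset.prod_pos fun j hj => sub_pos.mpr ?_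
      rw [Finset.mem_Ico] at hj
      exact hmono k j (by omega) (by omega)
    rw [e1]
    have h11 : (-1:ℝ)^k * (-1:ℝ)^k = 1 := by
      rw [← pow_add]
      exact Even.neg_one_pow ⟨k, by ring⟩
    calc (0:ℝ) < (∏ j ∈ Finset.range k, (v j - v k)) * ∏ j ∈ Finset.Ico (k+1) (d+1), (v k - v j) :=
          mul_pos p1 p2
      _ = (-1:ℝ)^k * ((-1:ℝ)^k * (∏ j ∈ Finset.range k, (v j - v k)) *
            ∏ j ∈ Finset.Ico (k+1) (d+1), (v k - v j)) := by
          rw [show ∀ A B : ℝ, (-1:ℝ)^k * ((-1:ℝ)^k * A * B) = ((-1:ℝ)^k * (-1:ℝ)^k) * (A * B) from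
            fun A B => by ring, h11, one_mul]
  have hLsign : ∀ k ∈ s, 0 < (-1:ℝ)^k * L k := by
    intro k hk
    have hD := hDsign k hk
    have hN := hNpos k
    rw [hLval k]
    rcases Nat.even_or_odd k with hpar | hpar
    · rw [hpar.neg_one_pow] at hD ⊢
      rw [one_mul] at hD ⊢
      exact div_pos hN hD
    · rw [hpar.neg_one_pow] at hD ⊢
      rw [neg_one_mul] at hD ⊢
      have hD' : (∏ j ∈ s.erase k, (v k - v j)) < 0 := by linarith
      have := div_neg_of_pos_of_neg hN hD'
      linarith
  have hLabs : ∀ k ∈ s, |L k| = (-1:ℝ)^k * L k := by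
    intro k hk
    have h := hLsign k hk
    have h2 : |(-1:ℝ)^k * L k| = (-1:ℝ)^k * L k := abs_of_pos h
    rwa [abs_mul, abs_pow, abs_neg, abs_one, one_pow, one_mul] at h2
  have hcard : #s = d + 1 := Finset.card_range _
  have hdegq : q.degree < (#s : ℕ) := by
    refine lt_of_le_of_lt Polynomial.degree_le_natDegree ?_
    exact_mod_cast (by omega : q.natDegree < #s)
  have hdegT : (Chebyshev.T ℝ d).degree < (#s : ℕ) := by
    refine lt_of_le_of_lt Polynomial.degree_le_natDegree ?_
    exact_mod_cast (by omega : (Chebyshev.T ℝ d).natDegree < #s)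
  have hq_eq := Lagrange.eq_interpolate (f := q) hinj hdegq
  have hT_eq := Lagrange.eq_interpolate (f := Chebyshev.T ℝ d) hinj hdegT
  have hTval : ∀ k ∈ s, (Chebyshev.T ℝ d).eval (v k) = (-1:ℝ)^k := by
    intro k hk
    simp only [hs, mem_range] at hk
    have h1 : (Chebyshev.T ℝ d).eval (Real.cos (k * π / d)) = Real.cos ((d:ℤ) * (k * π / d)) :=
      Chebyshev.T_real_cos (k * π / d) d
    have h2 : ((d:ℤ):ℝ) * (k * π / d) = k * π := by
      push_cast
      field_simp
    rw [hv]
    rw [h1, h2]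
    have h3 := Real.cos_nat_mul_pi_sub 0 k
    simpa using h3
  have hqx : q.eval x = ∑ k ∈ s, q.eval (v k) * L k := by
    conv_lhs => rw [hq_eq]
    rw [Lagrange.interpolate_apply, Polynomial.eval_finset_sum]
    exact Finset.sum_congr rfl fun k _ => by rw [eval_mul, eval_C]
  have hTx : (Chebyshev.T ℝ d).eval x = ∑ k ∈ s, (-1:ℝ)^k * L k := by
    conv_lhs => rw [hT_eq]
    rw [Lagrange.interpolate_apply, Polynomial.eval_finset_sum]
    exact Finset.sum_congr rfl fun k hk => by rw [eval_mul, eval_C, hTval k hk]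
  calc |q.eval x| = |∑ k ∈ s, q.eval (v k) * L k| := by rw [hqx]
    _ ≤ ∑ k ∈ s, |q.eval (v k) * L k| := Finset.abs_sum_le_sum_abs _ _
    _ ≤ ∑ k ∈ s, (-1:ℝ)^k * L k := by
        refine Finset.sum_le_sum fun k hk => ?_
        rw [abs_mul]
        have h1 : |q.eval (v k)| ≤ 1 := hbd _ (hvmem k)
        calc |q.eval (v k)| * |L k| ≤ 1 * |L k| :=
              mul_le_mul_of_nonneg_right h1 (abs_nonneg _)
          _ = (-1:ℝ)^k * L k := by rw [one_mul, hLabs k hk]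
    _ = (Chebyshev.T ℝ d).eval x := hTx.symm




lemma T_lt_two (d : ℕ) (hd : 1 ≤ d) {x : ℝ} (hx1 : 1 ≤ x)
    (hx2 : x ≤ 1 + 2/(99*(d:ℝ)^2)) : (Chebyshev.T ℝ d).eval x < 2 := by
  set D := (d:ℝ) with hD
  have hD1 : (1:ℝ) ≤ D := by rw [hD]; exact_mod_cast hd
  have hDpos : (0:ℝ) < D := by linarith
  have hsq : Real.sqrt (x^2-1) ≤ 31/(99*D) := by
    have h1 : x - 1 ≤ 2/(99*D^2) := by linarith
    have h2 : x + 1 ≤ 2 + 2/99 := by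
      have : 2/(99*D^2) ≤ 2/99 := by
        apply div_le_div_of_nonneg_left (by norm_num) (by norm_num)
        nlinarith
      linarith
    have h3 : x^2 - 1 ≤ (2/(99*D^2)) * (2 + 2/99) := by
      have e : x^2 - 1 = (x-1)*(x+1) := by ring
      rw [e]
      have hx1' : (0:ℝ) ≤ x + 1 := by linarith
      have hc : (0:ℝ) ≤ 2/(99*D^2) := by positivity
      nlinarith
    have h4 : (2/(99*D^2)) * (2 + 2/99) ≤ (31/(99*D))^2 := by
      rw [div_pow]
      rw [div_mul_eq_mul_div, div_le_div_iff₀ (by positivity) (by positivity)]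
      ring_nf
      nlinarith
    have h5 : Real.sqrt (x^2-1) ≤ Real.sqrt ((31/(99*D))^2) :=
      Real.sqrt_le_sqrt (by linarith)
    rwa [Real.sqrt_sq (by positivity)] at h5
  set y := x + Real.sqrt (x^2-1) with hy
  have hy1 : 1 ≤ y := by
    have := Real.sqrt_nonneg (x^2-1); simp only [hy]; linarith
  have hyle : y ≤ 1 + 1/(3*D) := by
    have h6 : 2/(99*D^2) ≤ 2/(99*D) := by
      apply div_le_div_of_nonneg_left (by norm_num) (by positivity)
      nlinarith
    have : (2:ℝ)/(99*D) + 31/(99*D) = 1/(3*D) := by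
      field_simp
      ring
    simp only [hy]
    linarith
  have hexp : y^d ≤ Real.exp (1/3) := by
    have h7 : y^d ≤ (1 + 1/(3*D))^d := pow_le_pow_left₀ (by linarith) hyle d
    have h8 : (1 + 1/(3*D)) ≤ Real.exp (1/(3*D)) := by
      have := Real.add_one_le_exp (1/(3*D)); linarith
    have h9 : (1 + 1/(3*D))^d ≤ Real.exp (1/(3*D))^d :=
      pow_le_pow_left₀ (by positivity) h8 d
    have h10 : Real.exp (1/(3*D))^d = Real.exp (d * (1/(3*D))) := (Real.exp_nat_mul _ d).symm
    have h11 : (d:ℝ) * (1/(3*D)) = 1/3 := by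
      rw [hD]; field_simp
    rw [h10, h11] at h9
    linarith
  have hlt : Real.exp (1/3:ℝ) < 2 := by
    have h12 : Real.exp (1/3:ℝ)^(3:ℕ) = Real.exp 1 := by
      rw [← Real.exp_nat_mul]; norm_num
    have h13 : Real.exp 1 < 8 := lt_trans Real.exp_one_lt_d9 (by norm_num)
    have h14 : Real.exp (1/3:ℝ)^(3:ℕ) < 2^(3:ℕ) := by rw [h12]; norm_num; linarith
    exact lt_of_pow_lt_pow_left₀ 3 (by norm_num) h14
  rw [T_eval_formula d hx1, ← hy]
  have hinv : y⁻¹^d ≤ y^d := by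
    apply pow_le_pow_left₀ (by positivity)
    have : y⁻¹ ≤ 1 := inv_le_one_of_one_le₀ hy1
    linarith
  linarith

/-- Slightly shrinking the domain of a degree-`d` polynomial only modestly
shrinks its range: if the variation of `p` on `[a,b]` is at least `H`,
`ε ≤ 1/(100 d²)` and `a' = a + ε(b-a)`, then the variation of `p` on `[a',b]`
is at least `H/2`. -/
theorem range_shrink_bound (p : Polynomial ℝ) (d : ℕ) (hd : p.natDegree = d)
    (a b H ε : ℝ) (hab : a < b) (hH : 0 < H)
    (hmax : ∃ x ∈ Set.Icc a b, ∃ y ∈ Set.Icc a b, |p.eval x - p.eval y| ≥ H)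
    (hε0 : 0 ≤ ε) (hε : ε ≤ 1 / (100 * (d : ℝ) ^ 2)) :
    ∃ x ∈ Set.Icc (a + ε * (b - a)) b, ∃ y ∈ Set.Icc (a + ε * (b - a)) b,
      |p.eval x - p.eval y| ≥ H / 2 := by
  by_cases hd0 : d = 0
  · subst hd0
    have hε' : ε = 0 := le_antisymm (by simpa using hε) hε0
    obtain ⟨x, hx, y, hy, hxy⟩ := hmax
    subst hε'
    refine ⟨x, by simpa using hx, y, by simpa using hy, by linarith⟩
  · have hd1 : 1 ≤ d := Nat.one_le_iff_ne_zero.mpr hd0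
    have hD1 : (1:ℝ) ≤ (d:ℝ) := by exact_mod_cast hd1
    have hd2 : (1:ℝ) ≤ (d:ℝ)^2 := by nlinarith
    have hd2pos : (0:ℝ) < (d:ℝ)^2 := by linarith
    set a' := a + ε*(b-a) with ha'
    by_contra hcon
    push_neg at hcon
    have hε100 : ε ≤ 1/100 := by
      have h : 1/(100*(d:ℝ)^2) ≤ 1/100 := by
        apply div_le_div_of_nonneg_left (by norm_num) (by norm_num)
        nlinarith
      linarith
    have hba : 0 < b - a := by linarith
    have hba'e : b - a' = (1-ε)*(b-a) := by rw [ha']; ring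
    have ha'b : a' < b := by nlinarith
    have hba' : 0 < b - a' := by linarith
    have haa' : a ≤ a' := by nlinarith
    obtain ⟨xM, hxM, hM⟩ := isCompact_Icc.exists_isMaxOn (Set.nonempty_Icc.mpr ha'b.le)
      (p.continuous).continuousOn
    obtain ⟨xm, hxm, hm⟩ := isCompact_Icc.exists_isMinOn (Set.nonempty_Icc.mpr ha'b.le)
      (p.continuous).continuousOn
    have hM' : ∀ z ∈ Set.Icc a' b, p.eval z ≤ p.eval xM := fun z hz => hM hz
    have hm' : ∀ z ∈ Set.Icc a' b, p.eval xm ≤ p.eval z := fun z hz => hm hz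
    set c := (p.eval xM + p.eval xm)/2 with hc
    have hMm : p.eval xM - p.eval xm < H/2 := by
      have h := hcon xM hxM xm hxm
      have h2 := hm' xM hxM
      rwa [abs_of_nonneg (by linarith)] at h
    have hcc : ∀ z ∈ Set.Icc a' b, |p.eval z - c| < H/4 := by
      intro z hz
      have h1 := hM' z hz
      have h2 := hm' z hz
      rw [abs_lt, hc]
      constructor <;> linarith
    set r : ℝ[X] := Polynomial.C ((a'+b)/2) + Polynomial.C (-(b-a')/2) * Polynomial.X with hr
    set q : ℝ[X] := Polynomial.C (4/H) * (p.comp r - Polynomial.C c) with hq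
    have hre : ∀ u : ℝ, r.eval u = (a'+b)/2 - (b-a')/2 * u := by
      intro u
      simp [hr]
      ring
    have hqe : ∀ u : ℝ, q.eval u = (4/H) * (p.eval ((a'+b)/2 - (b-a')/2*u) - c) := by
      intro u
      simp [hq, Polynomial.eval_comp, hre u]
    have h4H : (0:ℝ) < 4/H := by positivity
    have hqdeg : q.natDegree ≤ d := by
      rw [hq]
      refine le_trans (Polynomial.natDegree_C_mul_le _ _) ?_
      refine le_trans (Polynomial.natDegree_sub_le _ _) ?_
      simp only [Polynomial.natDegree_C, max_le_iff]
      constructor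
      · refine le_trans (Polynomial.natDegree_comp_le) ?_
        have hr1 : r.natDegree ≤ 1 := by rw [hr]; compute_degree
        calc p.natDegree * r.natDegree ≤ d * 1 :=
              Nat.mul_le_mul (le_of_eq hd) hr1
          _ = d := by ring
      · omega
    have hq1 : ∀ u ∈ Set.Icc (-1:ℝ) 1, |q.eval u| ≤ 1 := by
      intro u hu
      have hz : ((a'+b)/2 - (b-a')/2*u) ∈ Set.Icc a' b := by
        constructor <;> nlinarith [hu.1, hu.2]
      have hlt := hcc _ hz
      rw [hqe u, abs_mul, abs_of_pos h4H, div_mul_eq_mul_div, div_le_one hH]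
      have := abs_nonneg (p.eval ((a'+b)/2 - (b-a')/2*u) - c)
      linarith
    have hkey : ∀ z ∈ Set.Icc a b, |p.eval z - c| < H/2 := by
      intro z hz
      set u := (a'+b-2*z)/(b-a') with hu
      have hfu : (a'+b)/2 - (b-a')/2*u = z := by
        rw [hu]
        field_simp
        ring
      have hql : |q.eval u| < 2 := by
        have hu1 : -1 ≤ u := by
          rw [hu, le_div_iff₀ hba']
          linarith [hz.2]
        by_cases hu2 : u ≤ 1
        · have := hq1 u ⟨hu1, hu2⟩
          linarith
        · push_neg at hu2
          have hub : u ≤ 1 + 2/(99*(d:ℝ)^2) := by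
            rw [hu, div_le_iff₀ hba']
            set μ' := 2/(99*(d:ℝ)^2) with hμ'
            have hμ0 : (0:ℝ) ≤ μ' := by positivity
            have hkey2 : (1+ε) ≤ (1+μ')*(1-ε) := by
              have e0 : (99/100)*μ' = 2*(1/(100*(d:ℝ)^2)) := by
                rw [hμ']
                field_simp
              have e1 : 2*ε ≤ (99/100)*μ' := by rw [e0]; linarith
              have e2 : ε*μ' ≤ (1/100)*μ' := mul_le_mul_of_nonneg_right hε100 hμ0
              nlinarith
            have hz1 := hz.1
            have hprod := mul_le_mul_of_nonneg_right hkey2 hba.le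
            rw [ha']
            nlinarith
          have hT := paturi d hd1 q hqdeg hq1 hu2 (natDegree_T_le d)
          have hT2 := T_lt_two d hd1 (le_of_lt hu2) hub
          linarith
      rw [hqe u, hfu, abs_mul, abs_of_pos h4H, div_mul_eq_mul_div] at hql
      rw [div_lt_iff₀ hH] at hql
      linarith [abs_nonneg (p.eval z - c)]
    obtain ⟨x, hx, y, hy, hxy⟩ := hmax
    have h1 := hkey x hx
    have h2 := hkey y hy
    have hfin : |p.eval x - p.eval y| < H := by
      calc |p.eval x - p.eval y| ≤ |p.eval x - c| + |c - p.eval y| := abs_sub_le _ _ _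
        _ = |p.eval x - c| + |p.eval y - c| := by rw [abs_sub_comm c]
        _ < H/2 + H/2 := add_lt_add h1 h2
        _ = H := by ring
    linarith
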